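/- Let T > 0 and let f : ℝ^d → ℝ^d be globally Lipschitz with constant L > 0 (autonomous case). For every compact set K ⊆ ℝ^d and every ε > 0 there exist P ∈ ℕ₊ and parameters (W_i, A_i, B_i) ∈ ℝ^d × ℝ^{d×d} × ℝ^d, i = 1,…,P, such that for every z₀ ∈ K, the solution z of ż(t) = f(z(t)), z(0) = z₀, and the solution x of the autonomous neural ODE ẋ(t) = Σ_{i=1}^P W_i ∘ Σ(A_i x(t) + B_i), x(0) = z₀, satisfy sup_{t ∈ [0,T]} ‖z(t) − x(t)‖ ≤ ε. -/

import Mathlib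

open MeasureTheory Set
open scoped Topology

noncomputable section

/-- `n`-dimensional Euclidean space. -/
abbrev Euc (n : ℕ) := EuclideanSpace ℝ (Fin n)

/-- The autonomous neural ODE vector field `x ↦ Σ_{i=1}^P W_i ∘ ReLU(A_i x + B_i)`. -/
def autoNode {d P : ℕ} (W : Fin P → Euc d) (A : Fin P → Matrix (Fin d) (Fin d) ℝ)
    (B : Fin P → Euc d) (x : Euc d) : Euc d :=
  WithLp.toLp 2 (fun j => ∑ i, W i j * max (Matrix.mulVec (A i) x j + B i j) 0)


/-- Tangent-line bound for `exp`: key per-interval estimate. -/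
lemma exp_term_bound {tk tk1 R s : ℝ} (h1 : tk ≤ tk1) (h2 : tk1 ≤ R) :
    0 ≤ (Real.exp (min s tk1) - Real.exp (min s tk)) - Real.exp tk * (min s tk1 - min s tk) ∧
    (Real.exp (min s tk1) - Real.exp (min s tk)) - Real.exp tk * (min s tk1 - min s tk)
      ≤ (Real.exp R * (tk1 - tk)) * (min s tk1 - min s tk) := by
  rcases le_or_gt s tk with hs | hs
  · have hu : min s tk = s := min_eq_left hs
    have hv : min s tk1 = s := min_eq_left (hs.trans h1)
    rw [hu, hv]
    constructor <;> simp
  · have hu : min s tk = tk := min_eq_right hs.le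
    set v := min s tk1 with hvdef
    have hvtk : tk ≤ v := le_min hs.le h1
    have hvtk1 : v ≤ tk1 := min_le_right _ _
    have hvR : v ≤ R := hvtk1.trans h2
    rw [hu]
    constructor
    · -- exp v ≥ exp tk * (1 + (v - tk))
      have := Real.add_one_le_exp (v - tk)
      have h3 : Real.exp tk * ((v - tk) + 1) ≤ Real.exp tk * Real.exp (v - tk) := by
        exact mul_le_mul_of_nonneg_left this (Real.exp_pos tk).le
      rw [← Real.exp_add] at h3
      have : tk + (v - tk) = v := by ring
      rw [this] at h3
      nlinarith [h3]
    · -- upper bound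
      have hA : Real.exp v - Real.exp tk ≤ Real.exp v * (v - tk) := by
        have := Real.add_one_le_exp (tk - v)
        have h3 : Real.exp v * ((tk - v) + 1) ≤ Real.exp v * Real.exp (tk - v) := by
          exact mul_le_mul_of_nonneg_left this (Real.exp_pos v).le
        rw [← Real.exp_add] at h3
        have hvv : v + (tk - v) = tk := by ring
        rw [hvv] at h3
        nlinarith
      have hexpvR : Real.exp v ≤ Real.exp R := Real.exp_le_exp.2 hvR
      have htk : Real.exp tk ≤ Real.exp v := Real.exp_le_exp.2 hvtk
      have hC : Real.exp v - Real.exp tk ≤ Real.exp R * (tk1 - tk) :=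
        hA.trans (mul_le_mul hexpvR (by linarith) (by linarith) (Real.exp_pos R).le)
      have hB : (Real.exp v - Real.exp tk) * (v - tk) ≤ (Real.exp R * (tk1 - tk)) * (v - tk) :=
        mul_le_mul_of_nonneg_right hC (sub_nonneg.2 hvtk)
      have hD : (Real.exp v - Real.exp tk) - Real.exp tk * (v - tk)
          ≤ (Real.exp v - Real.exp tk) * (v - tk) := by
        nlinarith [mul_le_mul_of_nonneg_right hA (sub_nonneg.2 hvtk), sub_nonneg.2 hvtk,
          Real.exp_pos tk]
      linarith


/-- 1-D ReLU approximation of `exp` on `[-R, R]`. -/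
lemma exp_relu_approx (R δ : ℝ) (hR : 0 < R) (hδ : 0 < δ) :
    ∃ (N : ℕ) (γ : ℝ) (w b : Fin N ⊕ Fin N → ℝ),
      ∀ s ∈ Icc (-R) R, |Real.exp s - (γ + ∑ i, w i * max (s + b i) 0)| ≤ δ := by
  obtain ⟨N, hN⟩ := exists_nat_gt (4 * R ^ 2 * Real.exp R / δ)
  have hNpos : 0 < (N : ℝ) := lt_of_le_of_lt (by positivity) hN
  set m : ℝ := 2 * R / N with hm
  have hmpos : 0 < m := by positivity
  set t : ℕ → ℝ := fun k => -R + m * k with ht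
  have htmono : ∀ k : ℕ, t k ≤ t (k + 1) := by
    intro k
    simp only [ht, Nat.cast_succ]
    nlinarith
  have htN : t N = R := by
    simp only [ht, hm]
    field_simp
    ring
  have htle : ∀ k : ℕ, k ≤ N → t k ≤ R := by
    intro k hk
    rw [← htN]
    simp only [ht]
    have : (k : ℝ) ≤ N := Nat.cast_le.2 hk
    nlinarith
  refine ⟨N, Real.exp (-R), Sum.elim (fun k : Fin N => Real.exp (t k))
      (fun k : Fin N => -Real.exp (t k)),
    Sum.elim (fun k : Fin N => -(t k)) (fun k : Fin N => -(t (k + 1))), ?_⟩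
  intro s hs
  obtain ⟨hs1, hs2⟩ := hs
  -- rewrite the net
  have hrelu : ∀ c : ℝ, max (s + -c) 0 = s - min s c := by
    intro c
    rcases le_total s c with h | h
    · rw [min_eq_left h, max_eq_right (by linarith : s + -c ≤ 0)]
      ring
    · rw [min_eq_right h, max_eq_left (by linarith : (0:ℝ) ≤ s + -c)]
      ring
  have hnet : ∑ i : Fin N ⊕ Fin N,
      (Sum.elim (fun k : Fin N => Real.exp (t k)) (fun k : Fin N => -Real.exp (t k)) i) *
        max (s + Sum.elim (fun k : Fin N => -(t k)) (fun k : Fin N => -(t (k + 1))) i) 0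
      = ∑ k ∈ Finset.range N, Real.exp (t k) * (min s (t (k + 1)) - min s (t k)) := by
    rw [Fintype.sum_sum_type]
    simp only [Sum.elim_inl, Sum.elim_inr, hrelu]
    rw [Fin.sum_univ_eq_sum_range (fun k => Real.exp (t k) * (s - min s (t k))),
      Fin.sum_univ_eq_sum_range (fun k => -Real.exp (t k) * (s - min s (t (k + 1))))]
    rw [← Finset.sum_add_distrib]
    apply Finset.sum_congr rfl
    intro k _
    ring
  rw [hnet]
  -- telescoping
  have htel1 : ∑ k ∈ Finset.range N, (Real.exp (min s (t (k + 1))) - Real.exp (min s (t k)))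
      = Real.exp s - Real.exp (-R) := by
    rw [Finset.sum_range_sub (fun k => Real.exp (min s (t k)))]
    congr 2
    · rw [htN, min_eq_left hs2]
    · simp only [ht, Nat.cast_zero, mul_zero, add_zero]
      rw [min_eq_right hs1]
  have htel2 : ∑ k ∈ Finset.range N, (min s (t (k + 1)) - min s (t k)) = s - (-R) := by
    rw [Finset.sum_range_sub (fun k => min s (t k))]
    congr 1
    · rw [htN, min_eq_left hs2]
    · simp only [ht, Nat.cast_zero, mul_zero, add_zero]
      rw [min_eq_right hs1]
  have hkey : Real.exp s - (Real.exp (-R) +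
      ∑ k ∈ Finset.range N, Real.exp (t k) * (min s (t (k + 1)) - min s (t k)))
      = ∑ k ∈ Finset.range N, ((Real.exp (min s (t (k + 1))) - Real.exp (min s (t k)))
          - Real.exp (t k) * (min s (t (k + 1)) - min s (t k))) := by
    rw [Finset.sum_sub_distrib, htel1]
    ring
  rw [hkey]
  have hterm : ∀ k ∈ Finset.range N,
      0 ≤ (Real.exp (min s (t (k + 1))) - Real.exp (min s (t k)))
          - Real.exp (t k) * (min s (t (k + 1)) - min s (t k)) ∧
      (Real.exp (min s (t (k + 1))) - Real.exp (min s (t k)))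
          - Real.exp (t k) * (min s (t (k + 1)) - min s (t k))
        ≤ (Real.exp R * m) * (min s (t (k + 1)) - min s (t k)) := by
    intro k hk
    have hk' : k + 1 ≤ N := Finset.mem_range.1 hk
    have h2 : t (k + 1) ≤ R := htle _ hk'
    have h1 : t k ≤ t (k + 1) := htmono k
    have hmm : t (k + 1) - t k = m := by simp only [ht, Nat.cast_succ]; ring
    have := exp_term_bound (s := s) h1 h2
    rw [hmm] at this
    exact this
  rw [abs_le]
  constructor
  · have h0 : (0:ℝ) ≤ ∑ k ∈ Finset.range N, ((Real.exp (min s (t (k + 1))) - Real.exp (min s (t k)))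
        - Real.exp (t k) * (min s (t (k + 1)) - min s (t k))) :=
      Finset.sum_nonneg (fun k hk => (hterm k hk).1)
    linarith
  · have h1 := Finset.sum_le_sum (fun k hk => (hterm k hk).2)
    rw [← Finset.mul_sum, htel2] at h1
    have step1 : Real.exp R * m * (s - -R) ≤ Real.exp R * m * (2 * R) :=
      mul_le_mul_of_nonneg_left (by linarith) (by positivity)
    have hfin : Real.exp R * m * (2 * R) < δ := by
      have hq : m * N = 2 * R := by rw [hm]; field_simp
      have h2 : Real.exp R * m * (2 * R) * N = 4 * R ^ 2 * Real.exp R := by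
        linear_combination (2 * R * Real.exp R) * hq
      have h3 : 4 * R ^ 2 * Real.exp R < δ * N := by
        have := (div_lt_iff₀ hδ).1 hN
        linarith
      have h4 : Real.exp R * m * (2 * R) * N < δ * N := by rw [h2]; exact h3
      exact lt_of_mul_lt_mul_right h4 hNpos.le
    linarith

variable {d : ℕ}

/-- The linear functional `y ↦ ∑ k, a k * y k`. -/
def lin (a : Euc d) (y : Euc d) : ℝ := ∑ k, a k * y k

lemma lin_continuous (a : Euc d) : Continuous (lin a) := by
  apply continuous_finset_sum
  intro k _
  exact continuous_const.mul ((continuous_apply k).comp (PiLp.continuous_ofLp (p := 2) (β := fun _ : Fin d => ℝ)))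

lemma lin_add (a a' y : Euc d) : lin (a + a') y = lin a y + lin a' y := by
  simp only [lin, ← Finset.sum_add_distrib]
  apply Finset.sum_congr rfl
  intro k _
  have : (a + a') k = a k + a' k := rfl
  rw [this]; ring

lemma lin_zero (y : Euc d) : lin (0 : Euc d) y = 0 := by
  simp only [lin]
  apply Finset.sum_eq_zero
  intro k _
  have : (0 : Euc d) k = 0 := rfl
  rw [this, zero_mul]

lemma scalar_approx (g : Euc d → ℝ) (hg : Continuous g)
    (C : Set (Euc d)) (hC : IsCompact C) (δ : ℝ) (hδ : 0 < δ) :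
    ∃ (n : ℕ) (c : Fin n → ℝ) (a : Fin n → Euc d) (b : Fin n → ℝ),
      ∀ y ∈ C, |g y - ∑ i, c i * max (lin (a i) y + b i) 0| ≤ δ := by
  rcases C.eq_empty_or_nonempty with rfl | hne
  · exact ⟨0, fun i => 0, fun i => 0, fun i => 0, fun y hy => absurd hy (notMem_empty y)⟩
  haveI : CompactSpace C := isCompact_iff_compactSpace.1 hC
  -- the exponential functions
  set expFn : Euc d → C(C, ℝ) := fun a =>
    ⟨fun y : C => Real.exp (lin a y), (Real.continuous_exp.comp
      ((lin_continuous a).comp continuous_subtype_val))⟩ with hexpFn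
  set A : Subalgebra ℝ C(C, ℝ) := Algebra.adjoin ℝ (Set.range expFn) with hA
  have hsep : A.SeparatesPoints := by
    intro y1 y2 hy
    have h1 : (y1 : Euc d) ≠ (y2 : Euc d) := fun h => hy (Subtype.ext h)
    obtain ⟨k, hk⟩ : ∃ k, (y1 : Euc d) k ≠ (y2 : Euc d) k := by
      by_contra h
      push_neg at h
      exact h1 (WithLp.ofLp_injective (p := 2) (funext h))
    refine ⟨expFn (EuclideanSpace.single k 1), ⟨expFn (EuclideanSpace.single k 1),
      Algebra.subset_adjoin ⟨EuclideanSpace.single k 1, rfl⟩, rfl⟩, ?_⟩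
    have hl : ∀ y : C, lin (EuclideanSpace.single k 1) y = (y : Euc d) k := by
      intro y
      simp only [lin]
      rw [Finset.sum_eq_single k]
      · rw [EuclideanSpace.single_apply, if_pos rfl, one_mul]
      · intro j _ hj
        rw [EuclideanSpace.single_apply, if_neg hj, zero_mul]
      · intro hk'
        exact absurd (Finset.mem_univ k) hk'
    simp only [hexpFn, ContinuousMap.coe_mk, hl]
    exact fun h => hk (Real.exp_injective h)
  have hSW := ContinuousMap.subalgebra_topologicalClosure_eq_top_of_separatesPoints A hsep
  set gC : C(C, ℝ) := ⟨fun y : C => g y, hg.comp continuous_subtype_val⟩ with hgC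
  have hmem : gC ∈ closure (A : Set C(C, ℝ)) := by
    have : gC ∈ A.topologicalClosure := by rw [hSW]; trivial
    exact this
  obtain ⟨h, hhA, hdist⟩ := Metric.mem_closure_iff.1 hmem (δ / 2) (by positivity)
  have hpt : ∀ y : C, |g y - h y| ≤ δ / 2 := by
    intro y
    have := ContinuousMap.dist_apply_le_dist (f := gC) (g := h) y
    rw [Real.dist_eq] at this
    have h2 : (gC y : ℝ) = g y := rfl
    rw [h2] at this
    linarith [this.trans hdist.le]
  -- represent h as a finite sum of exponentials
  have hrep : ∃ (m : ℕ) (e : Fin m → ℝ) (v : Fin m → Euc d),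
      ∀ y : C, h y = ∑ i, e i * Real.exp (lin (v i) y) := by
    refine Algebra.adjoin_induction ?_ ?_ ?_ ?_ hhA
    · rintro x ⟨a, rfl⟩
      exact ⟨1, fun _ => 1, fun _ => a, fun y => by simp [hexpFn]⟩
    · intro r
      refine ⟨1, fun _ => r, fun _ => 0, fun y => ?_⟩
      simp [lin_zero]
    · rintro p q hp hq ⟨m1, e1, v1, h1⟩ ⟨m2, e2, v2, h2⟩
      refine ⟨m1 + m2, Fin.append e1 e2, Fin.append v1 v2, fun y => ?_⟩
      rw [ContinuousMap.add_apply, h1 y, h2 y, Fin.sum_univ_add]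
      congr 1
      · apply Finset.sum_congr rfl; intro i _; rw [Fin.append_left, Fin.append_left]
      · apply Finset.sum_congr rfl; intro i _; rw [Fin.append_right, Fin.append_right]
    · rintro p q hp hq ⟨m1, e1, v1, h1⟩ ⟨m2, e2, v2, h2⟩
      refine ⟨m1 * m2, fun p => e1 (finProdFinEquiv.symm p).1 * e2 (finProdFinEquiv.symm p).2,
        fun p => v1 (finProdFinEquiv.symm p).1 + v2 (finProdFinEquiv.symm p).2, fun y => ?_⟩
      rw [ContinuousMap.mul_apply, h1 y, h2 y, Finset.sum_mul_sum]
      rw [← Equiv.sum_comp finProdFinEquiv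
        (fun p => e1 (finProdFinEquiv.symm p).1 * e2 (finProdFinEquiv.symm p).2 *
          Real.exp (lin (v1 (finProdFinEquiv.symm p).1 + v2 (finProdFinEquiv.symm p).2) y))]
      rw [Fintype.sum_prod_type]
      apply Finset.sum_congr rfl; intro i _
      apply Finset.sum_congr rfl; intro j _
      rw [Equiv.symm_apply_apply]
      rw [lin_add, Real.exp_add]
      ring
  obtain ⟨m, e, v, hrep⟩ := hrep
  -- uniform bound for the linear functionals on C
  have hbd : ∀ i : Fin m, ∃ M : ℝ, ∀ y ∈ C, |lin (v i) y| ≤ M := by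
    intro i
    obtain ⟨M, hM⟩ := hC.exists_bound_of_continuousOn (lin_continuous (v i)).continuousOn
    exact ⟨M, fun y hy => hM y hy⟩
  choose M hM using hbd
  set R : ℝ := 1 + ∑ i, max (M i) 0 with hR
  have hRpos : 0 < R := by
    have : (0:ℝ) ≤ ∑ i, max (M i) 0 := Finset.sum_nonneg fun i _ => le_max_right _ _
    linarith
  have hMR : ∀ i : Fin m, ∀ y ∈ C, lin (v i) y ∈ Icc (-R) R := by
    intro i y hy
    have h1 : |lin (v i) y| ≤ M i := hM i y hy
    have h2 : max (M i) 0 ≤ ∑ j, max (M j) 0 :=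
      Finset.single_le_sum (f := fun j => max (M j) 0) (fun j _ => le_max_right _ _)
        (Finset.mem_univ i)
    have h3 : M i ≤ R := by
      have := le_max_left (M i) 0
      linarith
    rw [abs_le] at h1
    constructor <;> [linarith [h1.1]; linarith [h1.2]]
  set S : ℝ := ∑ i, |e i| with hS
  have hSnn : 0 ≤ S := Finset.sum_nonneg fun i _ => abs_nonneg _
  set δ₂ : ℝ := δ / (2 * (S + 1)) with hδ₂
  have hδ₂pos : 0 < δ₂ := by positivity
  obtain ⟨N, γ, w, b, hwb⟩ := exp_relu_approx R δ₂ hRpos hδ₂pos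
  -- assemble the final network
  set ι := Option (Fin m × (Fin N ⊕ Fin N)) with hι
  set eqv : Fin (Fintype.card ι) ≃ ι := (Fintype.equivFin ι).symm with heqv
  set c' : ι → ℝ := fun o => o.elim ((∑ i, e i) * γ) (fun p => e p.1 * w p.2) with hc'
  set a' : ι → Euc d := fun o => o.elim 0 (fun p => v p.1) with ha'
  set b' : ι → ℝ := fun o => o.elim 1 (fun p => b p.2) with hb'
  refine ⟨Fintype.card ι, c' ∘ eqv, a' ∘ eqv, b' ∘ eqv, fun y hy => ?_⟩
  have hsum : ∑ i, (c' ∘ eqv) i * max (lin ((a' ∘ eqv) i) y + (b' ∘ eqv) i) 0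
      = ∑ o : ι, c' o * max (lin (a' o) y + b' o) 0 :=
    Equiv.sum_comp eqv (fun o => c' o * max (lin (a' o) y + b' o) 0)
  rw [hsum]
  have hopt : ∑ o : ι, c' o * max (lin (a' o) y + b' o) 0
      = ∑ i : Fin m, e i * (γ + ∑ j : Fin N ⊕ Fin N, w j * max (lin (v i) y + b j) 0) := by
    rw [Fintype.sum_option]
    have hnone : c' none * max (lin (a' none) y + b' none) 0 = (∑ i, e i) * γ := by
      simp only [hc', ha', hb', Option.elim]
      rw [lin_zero, zero_add, max_eq_left (by norm_num : (0:ℝ) ≤ 1), mul_one]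
    rw [hnone, Fintype.sum_prod_type]
    simp only [hc', ha', hb', Option.elim]
    simp only [mul_add, Finset.sum_add_distrib]
    rw [← Finset.sum_mul]
    congr 1
    apply Finset.sum_congr rfl
    intro i _
    rw [Finset.mul_sum]
    apply Finset.sum_congr rfl
    intro j _
    ring
  rw [hopt]
  have hkey : ∀ i : Fin m,
      |Real.exp (lin (v i) y) - (γ + ∑ j : Fin N ⊕ Fin N, w j * max (lin (v i) y + b j) 0)| ≤ δ₂ :=
    fun i => hwb _ (hMR i y hy)
  have hy' : h ⟨y, hy⟩ = ∑ i, e i * Real.exp (lin (v i) y) := hrep ⟨y, hy⟩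
  have hsplit : |g y - ∑ i : Fin m, e i * (γ + ∑ j : Fin N ⊕ Fin N, w j * max (lin (v i) y + b j) 0)|
      ≤ |g y - h ⟨y, hy⟩| + |h ⟨y, hy⟩ - ∑ i : Fin m, e i *
          (γ + ∑ j : Fin N ⊕ Fin N, w j * max (lin (v i) y + b j) 0)| := by
    exact abs_sub_le _ _ _
  have hterm2 : |h ⟨y, hy⟩ - ∑ i : Fin m, e i *
      (γ + ∑ j : Fin N ⊕ Fin N, w j * max (lin (v i) y + b j) 0)| ≤ S * δ₂ := by
    rw [hy', ← Finset.sum_sub_distrib]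
    calc |∑ i : Fin m, (e i * Real.exp (lin (v i) y) - e i *
            (γ + ∑ j : Fin N ⊕ Fin N, w j * max (lin (v i) y + b j) 0))|
        ≤ ∑ i : Fin m, |e i * Real.exp (lin (v i) y) - e i *
            (γ + ∑ j : Fin N ⊕ Fin N, w j * max (lin (v i) y + b j) 0)| :=
          Finset.abs_sum_le_sum_abs _ _
      _ ≤ ∑ i : Fin m, |e i| * δ₂ := by
          apply Finset.sum_le_sum
          intro i _
          rw [← mul_sub, abs_mul]
          exact mul_le_mul_of_nonneg_left (hkey i) (abs_nonneg _)
      _ = S * δ₂ := by rw [hS, Finset.sum_mul]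
  have hSδ : S * δ₂ ≤ δ / 2 := by
    have hqq : δ₂ * (2 * (S + 1)) = δ := by
      rw [hδ₂]
      field_simp
    nlinarith [hδ₂pos.le, hSnn]
  have := hpt ⟨y, hy⟩
  have hgg : (g (⟨y, hy⟩ : C) : ℝ) = g y := rfl
  linarith [hsplit, hterm2]

lemma norm_le_sum_abs (v : Euc d) : ‖v‖ ≤ ∑ j, |v j| := by
  have hS : (0:ℝ) ≤ ∑ j, |v j| := Finset.sum_nonneg fun j _ => abs_nonneg _
  rw [EuclideanSpace.norm_eq]
  have h1 : ∑ j, ‖v j‖ ^ 2 ≤ (∑ j, |v j|) ^ 2 := by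
    have h2 : ∀ j : Fin d, ‖v j‖ ^ 2 ≤ |v j| * ∑ k, |v k| := by
      intro j
      rw [Real.norm_eq_abs, sq]
      exact mul_le_mul_of_nonneg_left
        (Finset.single_le_sum (f := fun k => |v k|) (fun k _ => abs_nonneg _)
          (Finset.mem_univ j)) (abs_nonneg _)
    calc ∑ j, ‖v j‖ ^ 2 ≤ ∑ j, |v j| * ∑ k, |v k| := Finset.sum_le_sum fun j _ => h2 j
      _ = (∑ j, |v j|) ^ 2 := by rw [← Finset.sum_mul, sq]
  calc Real.sqrt (∑ j, ‖v j‖ ^ 2) ≤ Real.sqrt ((∑ j, |v j|) ^ 2) := Real.sqrt_le_sqrt h1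
    _ = ∑ j, |v j| := Real.sqrt_sq hS

lemma vec_approx (f : Euc d → Euc d) (hf : Continuous f)
    (C : Set (Euc d)) (hC : IsCompact C) (δ : ℝ) (hδ : 0 < δ) :
    ∃ (P : ℕ), 0 < P ∧
      ∃ (W : Fin P → Euc d) (A : Fin P → Matrix (Fin d) (Fin d) ℝ) (B : Fin P → Euc d),
        ∀ y ∈ C, ‖f y - autoNode W A B y‖ ≤ δ := by
  have hδ' : 0 < δ / (d + 1) := by positivity
  have hcomp : ∀ j : Fin d, ∃ (n : ℕ) (c : Fin n → ℝ) (a : Fin n → Euc d) (b : Fin n → ℝ),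
      ∀ y ∈ C, |f y j - ∑ i, c i * max (lin (a i) y + b i) 0| ≤ δ / (d + 1) := by
    intro j
    exact scalar_approx (fun y => f y j) ((continuous_apply j).comp ((PiLp.continuous_ofLp (p := 2) (β := fun _ : Fin d => ℝ)).comp hf)) C hC _ hδ'
  choose n c a b hcab using hcomp
  set ι := Option (Σ j : Fin d, Fin (n j)) with hι
  set eqv : Fin (Fintype.card ι) ≃ ι := (Fintype.equivFin ι).symm with heqv
  set W' : ι → Euc d := fun o => o.elim 0 (fun p => EuclideanSpace.single p.1 (c p.1 p.2)) with hW'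
  set A' : ι → Matrix (Fin d) (Fin d) ℝ := fun o => o.elim 0 (fun p => fun _ k => a p.1 p.2 k)
    with hA'
  set B' : ι → Euc d := fun o => o.elim 0 (fun p => WithLp.toLp 2 (fun _ => b p.1 p.2)) with hB'
  refine ⟨Fintype.card ι, Fintype.card_pos, W' ∘ eqv, A' ∘ eqv, B' ∘ eqv, fun y hy => ?_⟩
  have hnode : ∀ j' : Fin d, autoNode (W' ∘ eqv) (A' ∘ eqv) (B' ∘ eqv) y j'
      = ∑ i, c j' i * max (lin (a j' i) y + b j' i) 0 := by
    intro j'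
    show ∑ i : Fin (Fintype.card ι), (W' ∘ eqv) i j' *
        max (Matrix.mulVec ((A' ∘ eqv) i) y j' + (B' ∘ eqv) i j') 0 = _
    have hsum : ∑ i : Fin (Fintype.card ι), (W' ∘ eqv) i j' *
        max (Matrix.mulVec ((A' ∘ eqv) i) y j' + (B' ∘ eqv) i j') 0
        = ∑ o : ι, W' o j' * max (Matrix.mulVec (A' o) y j' + B' o j') 0 :=
      Equiv.sum_comp eqv (fun o => W' o j' * max (Matrix.mulVec (A' o) y j' + B' o j') 0)
    rw [hsum, Fintype.sum_option]
    have hnone : W' none j' * max (Matrix.mulVec (A' none) y j' + B' none j') 0 = 0 := by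
      simp only [hW', Option.elim]
      show (0 : Euc d) j' * _ = 0
      rw [show (0 : Euc d) j' = 0 from rfl, zero_mul]
    rw [hnone, zero_add, ← Finset.univ_sigma_univ, Finset.sum_sigma]
    have hmv : ∀ (p : Σ j : Fin d, Fin (n j)), Matrix.mulVec (A' (some p)) y j' + B' (some p) j'
        = lin (a p.1 p.2) y + b p.1 p.2 := by
      intro p
      simp only [hA', hB', Option.elim]
      rfl
    calc ∑ j : Fin d, ∑ i : Fin (n j), W' (some ⟨j, i⟩) j' *
          max (Matrix.mulVec (A' (some ⟨j, i⟩)) y j' + B' (some ⟨j, i⟩) j') 0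
        = ∑ j : Fin d, ∑ i : Fin (n j), (if j' = j then c j i else 0) *
          max (lin (a j i) y + b j i) 0 := by
          apply Finset.sum_congr rfl; intro j _
          apply Finset.sum_congr rfl; intro i _
          rw [hmv ⟨j, i⟩]
          congr 1
          simp only [hW', Option.elim]
          exact EuclideanSpace.single_apply _ _ _
      _ = ∑ i, c j' i * max (lin (a j' i) y + b j' i) 0 := by
          rw [Finset.sum_eq_single j']
          · apply Finset.sum_congr rfl; intro i _; rw [if_pos rfl]
          · intro j _ hj
            apply Finset.sum_eq_zero; intro i _
            rw [if_neg (Ne.symm hj), zero_mul]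
          · intro h; exact absurd (Finset.mem_univ j') h
  calc ‖f y - autoNode (W' ∘ eqv) (A' ∘ eqv) (B' ∘ eqv) y‖
      ≤ ∑ j, |(f y - autoNode (W' ∘ eqv) (A' ∘ eqv) (B' ∘ eqv) y) j| := norm_le_sum_abs _
    _ ≤ ∑ j : Fin d, δ / (d + 1) := by
        apply Finset.sum_le_sum
        intro j _
        have : (f y - autoNode (W' ∘ eqv) (A' ∘ eqv) (B' ∘ eqv) y) j
            = f y j - autoNode (W' ∘ eqv) (A' ∘ eqv) (B' ∘ eqv) y j := rfl
        rw [this, hnode j]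
        exact hcab j y hy
    _ ≤ δ := by
        rw [Finset.sum_const, Finset.card_univ, Fintype.card_fin, nsmul_eq_mul]
        have h1 : (d:ℝ) * (δ/(d+1)) ≤ ((d:ℝ)+1) * (δ/(d+1)) :=
          mul_le_mul_of_nonneg_right (by linarith) hδ'.le
        have h2 : ((d:ℝ)+1) * (δ/(d+1)) = δ := by field_simp
        linarith

lemma gronwallBound_mono_x {δ K ε : ℝ} (hδ : 0 ≤ δ) (hε : 0 ≤ ε) (hK : 0 < K) {x y : ℝ}
    (h : x ≤ y) : gronwallBound δ K ε x ≤ gronwallBound δ K ε y := by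
  rw [gronwallBound_of_K_ne_0 hK.ne']
  simp only
  have h1 : Real.exp (K * x) ≤ Real.exp (K * y) :=
    Real.exp_le_exp.2 (mul_le_mul_of_nonneg_left h hK.le)
  have h2 : 0 ≤ ε / K := by positivity
  nlinarith [h1, h2, hδ]

/-- Remark 2.8, autonomous universal approximation: for `f : ℝ^d → ℝ^d`
globally `L`-Lipschitz, any compact set `K` of initial data and any `ε > 0`, there is an
autonomous neural ODE whose trajectories uniformly `ε`-approximate those of `ż = f(z)` on
`[0,T]`. -/
theorem autonomous_node_universal_approximation
    (d : ℕ) (T : ℝ) (hT : 0 < T)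
    (f : Euc d → Euc d)
    (L : ℝ) (hL : 0 < L)
    (hlip : ∀ x y : Euc d, ‖f x - f y‖ ≤ L * ‖x - y‖)
    (K : Set (Euc d)) (hK : IsCompact K)
    (ε : ℝ) (hε : 0 < ε) :
    ∃ (P : ℕ), 0 < P ∧
      ∃ (W : Fin P → Euc d) (A : Fin P → Matrix (Fin d) (Fin d) ℝ) (B : Fin P → Euc d),
        ∀ z₀ ∈ K, ∀ z x : ℝ → Euc d,
          z 0 = z₀ → x 0 = z₀ →
          (∀ t ∈ Icc (0:ℝ) T, HasDerivAt z (f (z t)) t) →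
          (∀ t ∈ Icc (0:ℝ) T, HasDerivAt x (autoNode W A B (x t)) t) →
          ∀ t ∈ Icc (0:ℝ) T, ‖z t - x t‖ ≤ ε := by
  have hlipW : LipschitzWith (Real.toNNReal L) f := by
    apply LipschitzWith.of_dist_le_mul
    intro u v
    rw [dist_eq_norm, dist_eq_norm, Real.coe_toNNReal L hL.le]
    exact hlip u v
  have hfc : Continuous f := hlipW.continuous
  obtain ⟨R₀, hR₀⟩ := hK.exists_bound_of_continuousOn continuousOn_id
  set R₀' : ℝ := max R₀ 0 with hR₀'def
  set R₁ : ℝ := gronwallBound R₀' L ‖f 0‖ T with hR₁def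
  have hR₁nn : 0 ≤ R₁ := by
    have := gronwallBound_mono_x (δ := R₀') (K := L) (ε := ‖f 0‖)
      (le_max_right R₀ 0) (norm_nonneg _) hL (le_refl 0)
    have h0 : gronwallBound R₀' L ‖f 0‖ 0 = R₀' := gronwallBound_x0 _ _ _
    have hmono := gronwallBound_mono_x (δ := R₀') (K := L) (ε := ‖f 0‖)
      (le_max_right R₀ 0) (norm_nonneg _) hL hT.le
    rw [h0] at hmono
    exact le_trans (le_max_right R₀ 0) hmono
  set Rc : ℝ := R₁ + 1 with hRcdef
  set ε' : ℝ := min (ε / 2) (1 / 2) with hε'def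
  have hε'pos : 0 < ε' := lt_min (by positivity) one_half_pos
  have hε'le : ε' ≤ 1 / 2 := min_le_right _ _
  set δ : ℝ := ε' * L / Real.exp (L * T) with hδdef
  have hδpos : 0 < δ := by positivity
  obtain ⟨P, hP, W, A, B, hnet⟩ := vec_approx f hfc (Metric.closedBall 0 Rc)
    (isCompact_closedBall 0 Rc) δ hδpos
  refine ⟨P, hP, W, A, B, ?_⟩
  intro z₀ hz₀ z x hz0 hx0 hz hx
  have hzc : ContinuousOn z (Icc 0 T) := fun t ht => ((hz t ht).continuousAt).continuousWithinAt
  have hxc : ContinuousOn x (Icc 0 T) := fun t ht => ((hx t ht).continuousAt).continuousWithinAt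
  -- a priori bound on z
  have hzbd : ∀ t ∈ Icc (0:ℝ) T, ‖z t‖ ≤ R₁ := by
    intro t ht
    have hgron := norm_le_gronwallBound_of_norm_deriv_right_le (f := z)
      (f' := fun t => f (z t)) (δ := R₀') (K := L) (ε := ‖f 0‖) (a := 0) (b := T) hzc
      (fun u hu => (hz u (Ico_subset_Icc_self hu)).hasDerivWithinAt)
      (by rw [hz0]; exact le_max_of_le_left (hR₀ z₀ hz₀))
      (fun u hu => by
        have h1 := hlip (z u) 0
        rw [sub_zero] at h1
        have h2 := norm_le_norm_add_norm_sub' (f (z u)) (f 0)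
        linarith)
      t ht
    rw [sub_zero] at hgron
    exact hgron.trans (gronwallBound_mono_x (le_max_right R₀ 0) (norm_nonneg _) hL ht.2)
  -- Grönwall comparison
  have hG : ∀ τ ∈ Icc (0:ℝ) T, (∀ u ∈ Icc (0:ℝ) τ, dist (z u) (x u) ≤ ε') →
      dist (z τ) (x τ) < ε' := by
    intro τ hτ hone
    have hIccsub : Icc (0:ℝ) τ ⊆ Icc 0 T := Icc_subset_Icc le_rfl hτ.2
    have hIcosub : Ico (0:ℝ) τ ⊆ Icc 0 T := fun u hu => ⟨hu.1, hu.2.le.trans hτ.2⟩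
    have hgbound : ∀ u ∈ Ico (0:ℝ) τ, dist (autoNode W A B (x u)) (f (x u)) ≤ δ := by
      intro u hu
      have huIcc : u ∈ Icc (0:ℝ) τ := Ico_subset_Icc_self hu
      have hd := hone u huIcc
      have hxu : x u ∈ Metric.closedBall (0 : Euc d) Rc := by
        rw [Metric.mem_closedBall, dist_zero_right]
        have h1 : ‖x u‖ ≤ ‖z u‖ + ‖x u - z u‖ := norm_le_norm_add_norm_sub' _ _
        have h2 : ‖x u - z u‖ = dist (z u) (x u) := by rw [dist_eq_norm, norm_sub_rev]
        have h3 := hzbd u (hIcosub hu)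
        rw [h2] at h1
        have : ε' ≤ 1 := hε'le.trans (by norm_num)
        simp only [hRcdef]
        linarith
      have := hnet (x u) hxu
      rw [dist_eq_norm, norm_sub_rev]
      exact this
    have happrox := dist_le_of_approx_trajectories_ODE (v := fun _ => f)
      (K := Real.toNNReal L) (f := z) (f' := fun t => f (z t)) (g := x)
      (g' := fun t => autoNode W A B (x t)) (εf := 0) (εg := δ) (δ := 0) (a := 0) (b := τ)
      (fun _ => hlipW) (hzc.mono hIccsub)
      (fun u hu => (hz u (hIcosub hu)).hasDerivWithinAt)
      (fun u _ => by rw [dist_self])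
      (hxc.mono hIccsub)
      (fun u hu => (hx u (hIcosub hu)).hasDerivWithinAt)
      hgbound
      (by rw [hz0, hx0, dist_self])
      τ (right_mem_Icc.2 hτ.1)
    have hcoe : (Real.toNNReal L : ℝ) = L := Real.coe_toNNReal L hL.le
    rw [hcoe, zero_add, sub_zero] at happrox
    refine lt_of_le_of_lt happrox ?_
    rw [gronwallBound_of_K_ne_0 hL.ne']
    simp only [zero_mul, zero_add]
    have h2 : δ / L = ε' / Real.exp (L * T) := by
      rw [hδdef]
      field_simp
    rw [h2]
    have h1 : Real.exp (L * τ) ≤ Real.exp (L * T) :=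
      Real.exp_le_exp.2 (mul_le_mul_of_nonneg_left hτ.2 hL.le)
    have h3 : Real.exp (L * τ) - 1 < Real.exp (L * T) := by linarith
    calc ε' / Real.exp (L * T) * (Real.exp (L * τ) - 1)
        < ε' / Real.exp (L * T) * Real.exp (L * T) := by
          apply mul_lt_mul_of_pos_left h3 (by positivity)
      _ = ε' := div_mul_cancel₀ _ (Real.exp_ne_zero _)
  -- bootstrap
  set S : Set ℝ := {t | t ∈ Icc (0:ℝ) T ∧ ∀ u ∈ Icc (0:ℝ) t, dist (z u) (x u) ≤ ε'} with hSdef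
  have h0S : (0:ℝ) ∈ S := by
    refine ⟨left_mem_Icc.2 hT.le, fun u hu => ?_⟩
    have hu0 : u = 0 := le_antisymm hu.2 hu.1
    rw [hu0, hz0, hx0, dist_self]
    exact hε'pos.le
  have hbdd : BddAbove S := ⟨T, fun t ht => ht.1.2⟩
  set τ : ℝ := sSup S with hτdef
  have hτmem : τ ∈ Icc (0:ℝ) T := ⟨le_csSup hbdd h0S, csSup_le ⟨0, h0S⟩ (fun t ht => ht.1.2)⟩
  have hτS : τ ∈ S := by
    refine ⟨hτmem, fun u hu => ?_⟩
    rcases lt_or_eq_of_le hu.2 with hlt | heq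
    · obtain ⟨t, htS, hut⟩ := exists_lt_of_lt_csSup ⟨0, h0S⟩ hlt
      exact htS.2 u ⟨hu.1, hut.le⟩
    · rcases eq_or_lt_of_le hu.1 with h0u | h0u
      · rw [← h0u, hz0, hx0, dist_self]
        exact hε'pos.le
      · -- u = τ, 0 < u : limit from the left
        have hprev : ∀ s ∈ Ico (0:ℝ) u, dist (z s) (x s) ≤ ε' := by
          intro s hs
          have hsτ : s < τ := heq ▸ hs.2
          obtain ⟨t, htS, hst⟩ := exists_lt_of_lt_csSup ⟨0, h0S⟩ hsτ
          exact htS.2 s ⟨hs.1, hst.le⟩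
        have huIcc : u ∈ Icc (0:ℝ) T := heq ▸ hτmem
        have hφ : ContinuousWithinAt (fun s => dist (z s) (x s)) (Ico 0 u) u := by
          have h1 : ContinuousWithinAt z (Icc 0 T) u := hzc u huIcc
          have h2 : ContinuousWithinAt x (Icc 0 T) u := hxc u huIcc
          exact ((h1.mono (fun s hs => ⟨hs.1, hs.2.le.trans huIcc.2⟩)).dist
            (h2.mono (fun s hs => ⟨hs.1, hs.2.le.trans huIcc.2⟩)))
        have hne : (𝓝[Ico (0:ℝ) u] u).NeBot := by
          rw [← mem_closure_iff_nhdsWithin_neBot, closure_Ico h0u.ne]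
          exact right_mem_Icc.2 hu.1
        exact le_of_tendsto hφ (eventually_nhdsWithin_of_forall hprev)
  have hτT : τ = T := by
    by_contra hneq
    have hτlt : τ < T := lt_of_le_of_ne hτmem.2 hneq
    have hlt := hG τ hτmem hτS.2
    have hφc : ContinuousAt (fun s => dist (z s) (x s)) τ :=
      ((hz τ hτmem).continuousAt.dist (hx τ hτmem).continuousAt)
    have hev : ∀ᶠ s in nhds τ, dist (z s) (x s) < ε' :=
      hφc.eventually_lt continuousAt_const hlt
    obtain ⟨η, hη, hball⟩ := Metric.eventually_nhds_iff.1 hev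
    set t' : ℝ := min T (τ + η / 2) with ht'def
    have hτt' : τ < t' := lt_min hτlt (by linarith)
    have ht'S : t' ∈ S := by
      refine ⟨⟨hτmem.1.trans hτt'.le, min_le_left _ _⟩, fun u hu => ?_⟩
      rcases le_or_gt u τ with huτ | huτ
      · exact hτS.2 u ⟨hu.1, huτ⟩
      · apply (hball ?_).le
        rw [Real.dist_eq, abs_of_pos (by linarith)]
        have : u ≤ t' := hu.2
        have : t' ≤ τ + η / 2 := min_le_right _ _
        linarith
    have : t' ≤ τ := le_csSup hbdd ht'S
    linarith
  intro t ht
  have hTS : T ∈ S := hτT ▸ hτS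
  have hd := hTS.2 t ht
  rw [dist_eq_norm] at hd
  have : ε' ≤ ε / 2 := min_le_left _ _
  linarith
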